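/- Let $(I_1,\ldots,I_K)$ be a uniformly random permutation of $\{1,\ldots,K\}$, let $A_1B_1,\ldots,A_KB_K$ be fixed real matrices with $C = \sum_j A_jB_j$, and for $1 \le m \le K$ let $C_m = \sum_{k=1}^m A_{I_k}B_{I_k}$. Then for every real $\beta$, the expected squared Frobenius error satisfies $\mathbb{E}\|C - \beta C_m\|_F^2 = \|C\|_F^2(1 - 2\beta\frac{m}{K}) + \beta^2\big(M_1\frac{m}{K} + 2M_2\frac{m(m-1)}{K(K-1)}\big)$, where $M_1 = \sum_{j=1}^K \|A_jB_j\|_F^2$ and $M_2 = \sum_{j < j'} \mathrm{Tr}((A_jB_j)^T(A_{j'}B_{j'}))$. -/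

import Mathlib

open Finset

section helpers

private lemma pair_trans' {K : ℕ} {k k' a b : Fin K} (hkk : k ≠ k') (hab : a ≠ b) :
    ∃ τ : Equiv.Perm (Fin K), τ k = a ∧ τ k' = b := by
  refine ⟨Equiv.swap (Equiv.swap k a k') b * Equiv.swap k a, ?_, ?_⟩ <;>
  · simp only [Equiv.Perm.mul_apply, Equiv.swap_apply_def]
    split_ifs <;> simp_all

private lemma sumA' {K : ℕ} (f : Fin K → ℝ) (k : Fin K) :
    ∑ σ : Equiv.Perm (Fin K), f (σ k) = (Nat.factorial (K-1) : ℝ) * ∑ j, f j := by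
  have hconst : ∀ j : Fin K, ∑ σ : Equiv.Perm (Fin K), f (σ j)
      = ∑ σ : Equiv.Perm (Fin K), f (σ k) := by
    intro j
    have := Equiv.sum_comp (Equiv.mulRight (Equiv.swap j k))
      (fun σ : Equiv.Perm (Fin K) => f (σ k))
    rw [← this]
    refine Finset.sum_congr rfl fun σ _ => ?_
    simp [Equiv.Perm.mul_apply]
  have h1 : ∑ j : Fin K, ∑ σ : Equiv.Perm (Fin K), f (σ j)
      = (Nat.factorial K : ℝ) * ∑ j, f j := by
    rw [Finset.sum_comm]
    have : ∀ σ : Equiv.Perm (Fin K), ∑ j, f (σ j) = ∑ j, f j := fun σ =>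
      Equiv.sum_comp σ f
    simp [this, Fintype.card_perm]
  have h2 : ∑ j : Fin K, ∑ σ : Equiv.Perm (Fin K), f (σ j)
      = (K : ℝ) * ∑ σ : Equiv.Perm (Fin K), f (σ k) := by
    simp [hconst]
  have hfac : (K : ℝ) * (Nat.factorial (K-1) : ℝ) = (Nat.factorial K : ℝ) := by
    have : K * Nat.factorial (K-1) = Nat.factorial K := by
      obtain ⟨n, rfl⟩ : ∃ n, K = n + 1 := ⟨K - 1, (Nat.succ_pred_eq_of_pos k.pos).symm⟩
      simp [Nat.factorial_succ]
    exact_mod_cast congrArg (Nat.cast : ℕ → ℝ) this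
  have hKne : (K : ℝ) ≠ 0 := Nat.cast_ne_zero.mpr k.pos.ne'
  have key : (K : ℝ) * ∑ σ : Equiv.Perm (Fin K), f (σ k)
      = (K : ℝ) * ((Nat.factorial (K-1) : ℝ) * ∑ j, f j) := by
    rw [← h2, h1, ← hfac]; ring
  exact mul_left_cancel₀ hKne key

private lemma sumB' {K : ℕ} (g : Fin K → Fin K → ℝ) (k k' : Fin K) (h : k ≠ k') :
    ∑ σ : Equiv.Perm (Fin K), g (σ k) (σ k') =
      (Nat.factorial (K-2) : ℝ) * ∑ p ∈ Finset.univ.offDiag, g p.1 p.2 := by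
  have hconst : ∀ p ∈ (Finset.univ : Finset (Fin K)).offDiag,
      ∑ σ : Equiv.Perm (Fin K), g (σ p.1) (σ p.2)
      = ∑ σ : Equiv.Perm (Fin K), g (σ k) (σ k') := by
    rintro ⟨a, b⟩ hp
    rw [Finset.mem_offDiag] at hp
    obtain ⟨τ, hτk, hτk'⟩ := pair_trans' h hp.2.2
    have := Equiv.sum_comp (Equiv.mulRight τ)
      (fun σ : Equiv.Perm (Fin K) => g (σ k) (σ k'))
    rw [← this]
    refine Finset.sum_congr rfl fun σ _ => ?_
    simp [Equiv.Perm.mul_apply, hτk, hτk']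
  have hre : ∀ σ : Equiv.Perm (Fin K),
      ∑ p ∈ (Finset.univ : Finset (Fin K)).offDiag, g (σ p.1) (σ p.2)
      = ∑ p ∈ (Finset.univ : Finset (Fin K)).offDiag, g p.1 p.2 := by
    intro σ
    refine Finset.sum_nbij' (fun p => (σ p.1, σ p.2)) (fun p => (σ⁻¹ p.1, σ⁻¹ p.2)) ?_ ?_ ?_ ?_ ?_
    · rintro ⟨a,b⟩ hp; rw [Finset.mem_offDiag] at hp ⊢
      exact ⟨Finset.mem_univ _, Finset.mem_univ _, fun hc => hp.2.2 (σ.injective hc)⟩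
    · rintro ⟨a,b⟩ hp; rw [Finset.mem_offDiag] at hp ⊢
      exact ⟨Finset.mem_univ _, Finset.mem_univ _, fun hc => hp.2.2 (σ⁻¹.injective hc)⟩
    · rintro ⟨a,b⟩ _; simp
    · rintro ⟨a,b⟩ _; simp
    · rintro ⟨a,b⟩ _; rfl
  have h1 : ∑ p ∈ (Finset.univ : Finset (Fin K)).offDiag,
      ∑ σ : Equiv.Perm (Fin K), g (σ p.1) (σ p.2)
      = (Nat.factorial K : ℝ) * ∑ p ∈ (Finset.univ : Finset (Fin K)).offDiag, g p.1 p.2 := by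
    rw [Finset.sum_comm]
    simp [hre, Fintype.card_perm]
  have hcard : (Finset.univ : Finset (Fin K)).offDiag.card = K * (K-1) := by
    rw [Finset.offDiag_card, Finset.card_univ, Fintype.card_fin, Nat.mul_sub, Nat.mul_one]
  have h2 : ∑ p ∈ (Finset.univ : Finset (Fin K)).offDiag,
      ∑ σ : Equiv.Perm (Fin K), g (σ p.1) (σ p.2)
      = ((K * (K-1) : ℕ) : ℝ) * ∑ σ : Equiv.Perm (Fin K), g (σ k) (σ k') := by
    rw [Finset.sum_congr rfl hconst, Finset.sum_const, hcard, nsmul_eq_mul]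
  have hK2 : 2 ≤ K := by
    rcases Nat.lt_or_ge K 2 with hlt | hge
    · exfalso; have := k.isLt; have := k'.isLt
      exact h (Fin.ext (by omega))
    · exact hge
  have hfac : ((K * (K-1) : ℕ) : ℝ) * (Nat.factorial (K-2) : ℝ) = (Nat.factorial K : ℝ) := by
    have hn : (K * (K-1)) * Nat.factorial (K-2) = Nat.factorial K := by
      obtain ⟨n, rfl⟩ : ∃ n, K = n + 2 := ⟨K - 2, by omega⟩
      simp [Nat.factorial_succ]
      ring
    exact_mod_cast congrArg (Nat.cast : ℕ → ℝ) hn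
  have hne : ((K * (K-1) : ℕ) : ℝ) ≠ 0 := by
    have : 0 < K * (K - 1) := Nat.mul_pos (by omega) (by omega)
    exact_mod_cast this.ne'
  have key : ((K * (K-1) : ℕ) : ℝ) * ∑ σ : Equiv.Perm (Fin K), g (σ k) (σ k')
      = ((K * (K-1) : ℕ) : ℝ) * ((Nat.factorial (K-2) : ℝ) * ∑ p ∈ (Finset.univ : Finset (Fin K)).offDiag, g p.1 p.2) := by
    rw [← h2, h1, ← hfac]; ring
  exact mul_left_cancel₀ hne key

private lemma ip_expand' {p q : ℕ} (C D : Matrix (Fin p) (Fin q) ℝ) (β : ℝ) :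
    (∑ a, ∑ b, (C - β • D) a b * (C - β • D) a b)
    = (∑ a, ∑ b, C a b * C a b) - 2*β*(∑ a, ∑ b, C a b * D a b)
      + β^2 * (∑ a, ∑ b, D a b * D a b) := by
  simp only [Matrix.sub_apply, Matrix.smul_apply, smul_eq_mul, Finset.mul_sum,
    ← Finset.sum_sub_distrib, ← Finset.sum_add_distrib]
  exact Finset.sum_congr rfl fun a _ => Finset.sum_congr rfl fun b _ => by ring

private lemma ip_right_sum' {p q : ℕ} {ι : Type*} (X : Matrix (Fin p) (Fin q) ℝ)
    (s : Finset ι) (F : ι → Matrix (Fin p) (Fin q) ℝ) :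
    (∑ a, ∑ b, X a b * (∑ j ∈ s, F j) a b)
    = ∑ j ∈ s, ∑ a, ∑ b, X a b * F j a b := by
  simp only [Matrix.sum_apply, Finset.mul_sum]
  exact Eq.trans (Finset.sum_congr rfl fun a _ => Finset.sum_comm) Finset.sum_comm

private lemma ip_left_sum' {p q : ℕ} {ι : Type*} (Y : Matrix (Fin p) (Fin q) ℝ)
    (s : Finset ι) (F : ι → Matrix (Fin p) (Fin q) ℝ) :
    (∑ a, ∑ b, (∑ j ∈ s, F j) a b * Y a b)
    = ∑ j ∈ s, ∑ a, ∑ b, F j a b * Y a b := by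
  simp only [Matrix.sum_apply, Finset.sum_mul]
  exact Eq.trans (Finset.sum_congr rfl fun a _ => Finset.sum_comm) Finset.sum_comm

private lemma stmt4_aux (K m p q : ℕ) (hK : 2 ≤ K) (hm : 1 ≤ m) (hmK : m ≤ K)
    (M : Fin K → Matrix (Fin p) (Fin q) ℝ) (β : ℝ) :
    (Nat.factorial K : ℝ)⁻¹ *
      ∑ σ : Equiv.Perm (Fin K),
        ∑ a, ∑ b,
          ((∑ j, M j) - β • ∑ k ∈ Finset.univ.filter (fun k : Fin K => (k : ℕ) < m), M (σ k)) a b *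
          ((∑ j, M j) - β • ∑ k ∈ Finset.univ.filter (fun k : Fin K => (k : ℕ) < m), M (σ k)) a b
    = (∑ a, ∑ b, (∑ j, M j) a b * (∑ j, M j) a b) * (1 - 2 * β * ((m : ℝ) / (K : ℝ)))
      + β ^ 2 * ((∑ j, ∑ a, ∑ b, M j a b * M j a b) * ((m : ℝ) / (K : ℝ))
          + 2 * (∑ j : Fin K, ∑ j' : Fin K, if j < j' then ∑ a, ∑ b, M j a b * M j' a b else 0)
              * (((m : ℝ) * ((m : ℝ) - 1)) / ((K : ℝ) * ((K : ℝ) - 1)))) := by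
  set T : Finset (Fin K) := Finset.univ.filter (fun k : Fin K => (k : ℕ) < m) with hT
  set C : Matrix (Fin p) (Fin q) ℝ := ∑ j, M j with hC
  set g : ℝ := ∑ a, ∑ b, C a b * C a b with hg
  set M1v : ℝ := ∑ j, ∑ a, ∑ b, M j a b * M j a b with hM1
  set M2v : ℝ := ∑ j : Fin K, ∑ j' : Fin K, if j < j' then ∑ a, ∑ b, M j a b * M j' a b else 0 with hM2
  set W : ℝ := ∑ pr ∈ (Finset.univ : Finset (Fin K)).offDiag, ∑ a, ∑ b, M pr.1 a b * M pr.2 a b with hW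
  have hTcard : T.card = m := by
    have : T = (Finset.range m).attachFin
        (fun x hx => lt_of_lt_of_le (Finset.mem_range.mp hx) hmK) := by
      ext k; simp [hT, Finset.mem_attachFin]
    rw [this, Finset.card_attachFin, Finset.card_range]
  -- per-σ expansion
  have hexp : ∀ σ : Equiv.Perm (Fin K),
      (∑ a, ∑ b, (C - β • ∑ k ∈ T, M (σ k)) a b * (C - β • ∑ k ∈ T, M (σ k)) a b)
      = g - 2*β * (∑ k ∈ T, ∑ a, ∑ b, C a b * M (σ k) a b)
        + β^2 * (∑ k ∈ T, ∑ k' ∈ T, ∑ a, ∑ b, M (σ k) a b * M (σ k') a b) := by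
    intro σ
    rw [ip_expand', ip_right_sum' C T (fun k => M (σ k)),
      ip_left_sum' _ T (fun k => M (σ k))]
    rw [Finset.sum_congr rfl fun k (_ : k ∈ T) => ip_right_sum' (M (σ k)) T (fun k' => M (σ k'))]
  -- sum over σ of constant g
  have hcardPerm : (Finset.univ : Finset (Equiv.Perm (Fin K))).card = Nat.factorial K := by
    rw [Finset.card_univ, Fintype.card_perm, Fintype.card_fin]
  -- sum of chi C (M j) over j equals g
  have hCsum : (∑ j, ∑ a, ∑ b, C a b * M j a b) = g := by
    rw [hg, hC, ip_right_sum' C Finset.univ M]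
  -- E1
  have hE1 : (∑ σ : Equiv.Perm (Fin K), ∑ k ∈ T, ∑ a, ∑ b, C a b * M (σ k) a b)
      = (m : ℝ) * ((Nat.factorial (K-1) : ℝ) * g) := by
    rw [Finset.sum_comm]
    rw [Finset.sum_congr rfl fun k (_ : k ∈ T) => sumA' (fun j => ∑ a, ∑ b, C a b * M j a b) k]
    rw [hCsum, Finset.sum_const, hTcard, nsmul_eq_mul]
  -- E2 diag
  have hE2d : (∑ σ : Equiv.Perm (Fin K), ∑ k ∈ T, ∑ a, ∑ b, M (σ k) a b * M (σ k) a b)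
      = (m : ℝ) * ((Nat.factorial (K-1) : ℝ) * M1v) := by
    rw [Finset.sum_comm]
    rw [Finset.sum_congr rfl fun k (_ : k ∈ T) => sumA' (fun j => ∑ a, ∑ b, M j a b * M j a b) k]
    rw [Finset.sum_const, hTcard, nsmul_eq_mul, hM1]
  -- E2 offdiag
  have hE2o : (∑ σ : Equiv.Perm (Fin K), ∑ pr ∈ T.offDiag, ∑ a, ∑ b, M (σ pr.1) a b * M (σ pr.2) a b)
      = ((m : ℝ) * ((m : ℝ) - 1)) * ((Nat.factorial (K-2) : ℝ) * W) := by
    rw [Finset.sum_comm]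
    rw [Finset.sum_congr rfl fun pr (hpr : pr ∈ T.offDiag) =>
      sumB' (fun j j' => ∑ a, ∑ b, M j a b * M j' a b) pr.1 pr.2
        (Finset.mem_offDiag.mp hpr).2.2]
    rw [Finset.sum_const, nsmul_eq_mul, Finset.offDiag_card, hTcard]
    rw [← hW]
    congr 1
    have : m * m - m = m * (m - 1) := by rw [Nat.mul_sub, Nat.mul_one]
    rw [this]
    push_cast [Nat.cast_sub hm]
    ring
  -- split double sum over T into diag and offdiag
  have hsplit : ∀ σ : Equiv.Perm (Fin K),
      (∑ k ∈ T, ∑ k' ∈ T, ∑ a, ∑ b, M (σ k) a b * M (σ k') a b)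
      = (∑ k ∈ T, ∑ a, ∑ b, M (σ k) a b * M (σ k) a b)
        + ∑ pr ∈ T.offDiag, ∑ a, ∑ b, M (σ pr.1) a b * M (σ pr.2) a b := by
    intro σ
    rw [← Finset.sum_product' T T (fun k k' => ∑ a, ∑ b, M (σ k) a b * M (σ k') a b),
      ← Finset.diag_union_offDiag T,
      Finset.sum_union (Finset.disjoint_diag_offDiag T), Finset.sum_diag]
  -- W = 2 * M2v
  have hWM2 : W = 2 * M2v := by
    have hsymm : ∀ a b : Fin K, (∑ x, ∑ y, M b x y * M a x y) = (∑ x, ∑ y, M a x y * M b x y) :=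
      fun a b => Finset.sum_congr rfl fun _ _ => Finset.sum_congr rfl fun _ _ => mul_comm _ _
    have h0 : W = ∑ j : Fin K, ∑ j' : Fin K,
        if j ≠ j' then ∑ a, ∑ b, M j a b * M j' a b else 0 := by
      rw [hW]
      rw [show (Finset.univ : Finset (Fin K)).offDiag
          = (Finset.univ ×ˢ Finset.univ).filter (fun pr : Fin K × Fin K => pr.1 ≠ pr.2) from by ext x; simp [Finset.mem_offDiag]]
      rw [Finset.sum_filter, Finset.sum_product]
    have h1 : ∀ j j' : Fin K,
        (if j ≠ j' then ∑ a, ∑ b, M j a b * M j' a b else 0)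
        = (if j < j' then ∑ a, ∑ b, M j a b * M j' a b else 0)
          + (if j' < j then ∑ a, ∑ b, M j a b * M j' a b else 0) := by
      intro j j'
      rcases lt_trichotomy j j' with h | h | h
      · rw [if_pos h.ne, if_pos h, if_neg (lt_asymm h), add_zero]
      · rw [if_neg (by simp [h]), if_neg (by simp [h]), if_neg (by simp [h]), add_zero]
      · rw [if_pos h.ne', if_neg (lt_asymm h), if_pos h, zero_add]
    rw [h0]
    simp only [h1, Finset.sum_add_distrib]
    have h2 : (∑ j : Fin K, ∑ j' : Fin K, if j' < j then ∑ a, ∑ b, M j a b * M j' a b else 0)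
        = M2v := by
      rw [Finset.sum_comm, hM2]
      refine Finset.sum_congr rfl fun j _ => Finset.sum_congr rfl fun j' _ => ?_
      by_cases h : j < j'
      · rw [if_pos h, if_pos h, hsymm]
      · rw [if_neg h, if_neg h]
    rw [h2, hM2]
    ring
  -- put everything together
  have hsum : (∑ σ : Equiv.Perm (Fin K),
      ∑ a, ∑ b, (C - β • ∑ k ∈ T, M (σ k)) a b * (C - β • ∑ k ∈ T, M (σ k)) a b)
      = (Nat.factorial K : ℝ) * g
        - 2*β * ((m : ℝ) * ((Nat.factorial (K-1) : ℝ) * g))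
        + β^2 * ((m : ℝ) * ((Nat.factorial (K-1) : ℝ) * M1v)
          + ((m : ℝ) * ((m : ℝ) - 1)) * ((Nat.factorial (K-2) : ℝ) * W)) := by
    rw [Finset.sum_congr rfl fun σ _ => (hexp σ).trans (by rw [hsplit σ])]
    rw [Finset.sum_add_distrib, Finset.sum_sub_distrib, Finset.sum_const, hcardPerm,
      nsmul_eq_mul, ← Finset.mul_sum, ← Finset.mul_sum, Finset.sum_add_distrib, hE1, hE2d, hE2o]
  rw [hsum, hWM2]
  -- final arithmetic
  have hf1 : (Nat.factorial K : ℝ) = (K : ℝ) * (Nat.factorial (K-1) : ℝ) := by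
    have := Nat.mul_factorial_pred (show K ≠ 0 by omega)
    exact_mod_cast (congrArg (Nat.cast : ℕ → ℝ) this).symm
  have hf2 : (Nat.factorial (K-1) : ℝ) = ((K : ℝ) - 1) * (Nat.factorial (K-2) : ℝ) := by
    have h1 := Nat.mul_factorial_pred (show K - 1 ≠ 0 by omega)
    have h2 : K - 1 - 1 = K - 2 := by omega
    rw [h2] at h1
    have := congrArg (Nat.cast : ℕ → ℝ) h1
    push_cast [Nat.cast_sub (show 1 ≤ K by omega)] at this
    linarith [this]
  have hKne : (K : ℝ) ≠ 0 := by positivity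
  have hK1ne : (K : ℝ) - 1 ≠ 0 := by
    have : (2 : ℝ) ≤ (K : ℝ) := by exact_mod_cast hK
    linarith
  have hFne : (Nat.factorial (K-2) : ℝ) ≠ 0 := by
    exact_mod_cast (Nat.factorial_pos (K-2)).ne'
  rw [hf1, hf2]
  field_simp

end helpers

/-- Expansion of the expected squared Frobenius error of the scaled partial sum
under a uniformly random permutation:
`E‖C - β C_m‖_F² = ‖C‖_F²(1 - 2β m/K) + β²(M₁ m/K + 2 M₂ m(m-1)/(K(K-1)))`. -/
theorem stmt4 (K m p q : ℕ) (hK : 2 ≤ K) (hm : 1 ≤ m) (hmK : m ≤ K)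
    (M : Fin K → Matrix (Fin p) (Fin q) ℝ) (β : ℝ) :
    let inner : Matrix (Fin p) (Fin q) ℝ → Matrix (Fin p) (Fin q) ℝ → ℝ :=
      fun X Y => ∑ a, ∑ b, X a b * Y a b
    let C : Matrix (Fin p) (Fin q) ℝ := ∑ j, M j
    let M1 : ℝ := ∑ j, inner (M j) (M j)
    let M2 : ℝ := ∑ j : Fin K, ∑ j' : Fin K, if j < j' then inner (M j) (M j') else 0
    let Cm : Equiv.Perm (Fin K) → Matrix (Fin p) (Fin q) ℝ :=
      fun σ => ∑ k ∈ Finset.univ.filter (fun k : Fin K => (k : ℕ) < m), M (σ k)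
    (Nat.factorial K : ℝ)⁻¹ *
      ∑ σ : Equiv.Perm (Fin K), inner (C - β • Cm σ) (C - β • Cm σ)
    = inner C C * (1 - 2 * β * ((m : ℝ) / (K : ℝ)))
      + β ^ 2 * (M1 * ((m : ℝ) / (K : ℝ))
          + 2 * M2 * (((m : ℝ) * ((m : ℝ) - 1)) / ((K : ℝ) * ((K : ℝ) - 1)))) := by
  intro inner C M1 M2 Cm
  exact stmt4_aux K m p q hK hm hmK M β
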